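/- Let B be an r×r real symmetric positive definite matrix and let S ∈ ℝ^{r×r} be arbitrary. Then there exists a unique pair (S', Ω') of r×r real matrices such that S' is symmetric (S' = S'ᵀ), Ω' is skew-symmetric (Ω' = −Ω'ᵀ), and Ω'B + S' − BΩ'ᵀ = S. -/

import Mathlib

open Matrix

private lemma diag_mulBmulT {r : ℕ} (B X : Matrix (Fin r) (Fin r) ℝ) (i : Fin r) :
    (X * B * Xᵀ) i i = dotProduct (X i) (B *ᵥ (X i)) := by
  simp only [mul_apply, transpose_apply, dotProduct, mulVec, Finset.sum_mul, Finset.mul_sum]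
  rw [Finset.sum_comm]
  exact Finset.sum_congr rfl fun j _ => Finset.sum_congr rfl fun k _ => by ring

private lemma lyap_inj {r : ℕ} {B : Matrix (Fin r) (Fin r) ℝ} (hB : B.PosDef)
    {X : Matrix (Fin r) (Fin r) ℝ} (h : X * B + B * X = 0) : X = 0 := by
  have h0 : trace (Xᵀ * (X * B + B * X)) = 0 := by rw [h, mul_zero, trace_zero]
  have hsplit : trace (Xᵀ * (X * B + B * X))
      = trace (X * B * Xᵀ) + trace (Xᵀ * B * X) := by
    rw [mul_add, trace_add, ← mul_assoc, ← mul_assoc, trace_mul_comm (Xᵀ * X) B]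
    rw [show B * (Xᵀ * X) = (B * Xᵀ) * X from (mul_assoc _ _ _).symm]
    rw [trace_mul_comm (B * Xᵀ) X, mul_assoc, ← mul_assoc]
  have t1 : trace (X * B * Xᵀ) = ∑ i, dotProduct (X i) (B *ᵥ (X i)) := by
    rw [trace]; exact Finset.sum_congr rfl fun i _ => diag_mulBmulT B X i
  have t2 : trace (Xᵀ * B * X) = ∑ i, dotProduct (Xᵀ i) (B *ᵥ (Xᵀ i)) := by
    rw [show Xᵀ * B * X = Xᵀ * B * Xᵀᵀ by rw [transpose_transpose], trace]
    exact Finset.sum_congr rfl fun i _ => diag_mulBmulT B Xᵀ i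
  have t2nn : 0 ≤ trace (Xᵀ * B * X) := by
    rw [t2]
    exact Finset.sum_nonneg fun i _ => by simpa using hB.posSemidef.dotProduct_mulVec_nonneg (Xᵀ i)
  have tnn : ∀ i : Fin r, 0 ≤ dotProduct (X i) (B *ᵥ (X i)) := fun i => by
    simpa using hB.posSemidef.dotProduct_mulVec_nonneg (X i)
  have t1z : ∑ i, dotProduct (X i) (B *ᵥ (X i)) = 0 := by
    have heq := hsplit.symm.trans h0
    rw [t1] at heq
    have h1 : (0:ℝ) ≤ ∑ i, dotProduct (X i) (B *ᵥ (X i)) :=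
      Finset.sum_nonneg fun i _ => tnn i
    linarith
  ext i j
  have hz := (Finset.sum_eq_zero_iff_of_nonneg (fun i _ => tnn i)).mp t1z i (Finset.mem_univ i)
  by_contra hne
  have hXi : X i ≠ 0 := by
    intro hXi0
    exact hne (by rw [show X i j = 0 from congrFun hXi0 j]; simp)
  have hpos := hB.dotProduct_mulVec_pos hXi
  simp only [star_trivial] at hpos
  rw [hz] at hpos
  exact lt_irrefl _ hpos

/-- For a symmetric positive definite `B` and an arbitrary `S`, there is a unique pair
`(S', Ω')` with `S'` symmetric, `Ω'` skew-symmetric, and `Ω'B + S' − BΩ'ᵀ = S`. -/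
theorem stmt13 {r : ℕ} (B S : Matrix (Fin r) (Fin r) ℝ) (hB : B.PosDef) :
    ∃! q : Matrix (Fin r) (Fin r) ℝ × Matrix (Fin r) (Fin r) ℝ,
      q.1.IsSymm ∧ q.2ᵀ = -q.2 ∧ q.2 * B + q.1 - B * q.2ᵀ = S := by
  have hBs : Bᵀ = B := hB.isHermitian.eq
  set L : Matrix (Fin r) (Fin r) ℝ →ₗ[ℝ] Matrix (Fin r) (Fin r) ℝ :=
    LinearMap.mulRight ℝ B + LinearMap.mulLeft ℝ B with hL
  have hLapp : ∀ X, L X = X * B + B * X := fun X => rfl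
  have hinj : Function.Injective L := by
    rw [← LinearMap.ker_eq_bot, LinearMap.ker_eq_bot']
    intro X hX
    exact lyap_inj hB (by rw [← hLapp]; exact hX)
  have hsurj : Function.Surjective L :=
    (LinearMap.injective_iff_surjective).mp hinj
  set C : Matrix (Fin r) (Fin r) ℝ := (1/2 : ℝ) • (S - Sᵀ) with hC
  set Sym : Matrix (Fin r) (Fin r) ℝ := (1/2 : ℝ) • (S + Sᵀ) with hSym
  obtain ⟨Ω, hΩ⟩ := hsurj C
  rw [hLapp] at hΩ
  have hskew : Ωᵀ = -Ω := by
    have ht := congrArg transpose hΩ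
    rw [transpose_add, transpose_mul, transpose_mul, hBs] at ht
    have hCt : Cᵀ = -C := by
      rw [hC, transpose_smul, transpose_sub, transpose_transpose, ← smul_neg, neg_sub]
    rw [hCt] at ht
    have hLneg : (-Ωᵀ) * B + B * (-Ωᵀ) = C := by
      rw [neg_mul, mul_neg, ← neg_add, add_comm, ht, neg_neg]
    have hinjres : -Ωᵀ = Ω := hinj (by rw [hLapp, hLapp, hLneg, hΩ])
    exact neg_eq_iff_eq_neg.mp hinjres
  have hSymm : Sym.IsSymm := by
    rw [Matrix.IsSymm, hSym, transpose_smul, transpose_add, transpose_transpose, add_comm]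
  have hCSym : C + Sym = S := by
    rw [hC, hSym, ← smul_add]
    rw [show S - Sᵀ + (S + Sᵀ) = (2:ℝ) • S by module]
    module
  refine ⟨(Sym, Ω), ⟨hSymm, hskew, ?_⟩, ?_⟩
  · simp only [hskew, mul_neg, sub_neg_eq_add]
    rw [show Ω * B + Sym + B * Ω = (Ω * B + B * Ω) + Sym by abel, hΩ, hCSym]
  · rintro ⟨S₁, Ω₁⟩ ⟨hS₁, hΩ₁skew, heq⟩
    simp only at hS₁ hΩ₁skew heq
    rw [hΩ₁skew, mul_neg, sub_neg_eq_add] at heq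
    have h1 : (Ω₁ * B + B * Ω₁) + S₁ = S := by rw [← heq]; abel
    have ht := congrArg transpose h1
    rw [transpose_add, transpose_add, transpose_mul, transpose_mul, hBs, hΩ₁skew, hS₁.eq] at ht
    have h2 : -(Ω₁ * B + B * Ω₁) + S₁ = Sᵀ := by
      rw [← ht]; simp only [mul_neg, neg_mul]; abel
    have hS1 : S₁ = Sym := by
      have hsum : S₁ + S₁ = S + Sᵀ := by
        have := congrArg₂ (· + ·) h1 h2
        rw [← this]; abel
      have h2smul : (2:ℝ) • S₁ = (2:ℝ) • Sym := by
        rw [two_smul, hsum, hSym]; module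
      exact smul_right_injective _ (two_ne_zero) h2smul
    have hK : Ω₁ * B + B * Ω₁ = C := by
      have hdiff : (Ω₁ * B + B * Ω₁) + (Ω₁ * B + B * Ω₁) = S - Sᵀ := by
        have := congrArg₂ (· - ·) h1 h2
        rw [← this]; abel
      have h2smul : (2:ℝ) • (Ω₁ * B + B * Ω₁) = (2:ℝ) • C := by
        rw [two_smul, hdiff, hC]; module
      exact smul_right_injective _ (two_ne_zero) h2smul
    have hΩeq : Ω₁ = Ω := hinj (by rw [hLapp, hLapp, hΩ, hK])
    exact Prod.ext hS1 hΩeq
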